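/- Let F be a finite field with q elements, and let m, n, T be positive integers. Let p be any probability mass function on the set F^{m×T} of m×T matrices over F, let X ~ p, let G be an n×m matrix over F chosen uniformly at random independently of X, and set Y = G·X. Then the mutual information between the matrices equals the mutual information between their row spaces: I(X;Y) = I(⟨X⟩;⟨Y⟩), where ⟨X⟩ and ⟨Y⟩ denote the F-linear spans of the rows of X and Y respectively. (In particular, the non-coherent matrix channel and the induced subspace channel have the same capacity.) -/

import Mathlib

open Finset

/- Mutual information (in nats) between two finite-valued random variables `U` and `V`
defined on a finite probability space with probability mass function `μ`. -/
open Classical in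
noncomputable def mutualInfo {Ω A B : Type*} [Fintype Ω] (μ : Ω → ℝ) (U : Ω → A) (V : Ω → B) : ℝ :=
  ∑ ω : Ω, μ ω * Real.log
    ((∑ ω' : Ω, if U ω' = U ω ∧ V ω' = V ω then μ ω' else 0) /
     ((∑ ω' : Ω, if U ω' = U ω then μ ω' else 0) * (∑ ω' : Ω, if V ω' = V ω then μ ω' else 0)))

/-- The joint probability mass function on pairs `(X, G)` where `X` has pmf `p` and
the channel matrix `G` is uniform on `F^{n×m}`, independent of `X`. -/
noncomputable def channelPMF (F : Type) [Field F] [Fintype F] (m n T : ℕ)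
    (p : Matrix (Fin m) (Fin T) F → ℝ) :
    Matrix (Fin m) (Fin T) F × Matrix (Fin n) (Fin m) F → ℝ :=
  fun ω => p ω.1 / (Fintype.card (Matrix (Fin n) (Fin m) F) : ℝ)



section AuxLemmas

set_option linter.unusedSectionVars false

variable {F : Type} [Field F] [Fintype F] {m n T : ℕ}

lemma row_mul (g : Matrix (Fin n) (Fin m) F) (x : Matrix (Fin m) (Fin T) F) (i : Fin n) :
    (g * x) i = Matrix.vecMul (g i) x := by
  funext j
  simp [Matrix.mul_apply, Matrix.vecMul, dotProduct]

lemma mul_eq_zero_iff_rows (g : Matrix (Fin n) (Fin m) F) (x : Matrix (Fin m) (Fin T) F) :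
    g * x = 0 ↔ ∀ i, Matrix.vecMul (g i) x = 0 := by
  constructor
  · intro h i
    rw [← row_mul, h]
    rfl
  · intro h
    funext i j
    have := congrFun (h i) j
    rw [← row_mul] at this
    simpa using this

lemma solvable_iff (x : Matrix (Fin m) (Fin T) F) (y : Matrix (Fin n) (Fin T) F) :
    (∃ g : Matrix (Fin n) (Fin m) F, g * x = y) ↔
      Submodule.span F (Set.range y) ≤ Submodule.span F (Set.range x) := by
  constructor
  · rintro ⟨g, rfl⟩
    rw [Submodule.span_le]
    rintro _ ⟨i, rfl⟩
    rw [row_mul, ← (Eq.trans (range_vecMulLinear x) rfl : LinearMap.range (Matrix.vecMulLinear x) = Submodule.span F (Set.range x))]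
    exact ⟨g i, rfl⟩
  · intro h
    have hy : ∀ i, ∃ v : Fin m → F, Matrix.vecMul v x = y i := by
      intro i
      have : y i ∈ Submodule.span F (Set.range x) := h (Submodule.subset_span ⟨i, rfl⟩)
      rw [← (Eq.trans (range_vecMulLinear x) rfl : LinearMap.range (Matrix.vecMulLinear x) = Submodule.span F (Set.range x))] at this
      exact this
    choose g hg using hy
    exact ⟨Matrix.of g, funext fun i => by rw [row_mul]; exact hg i⟩

open Classical in
lemma card_sol_zero (x : Matrix (Fin m) (Fin T) F) :
    Fintype.card {g : Matrix (Fin n) (Fin m) F // g * x = 0} =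
      Fintype.card F ^ (n * (m - Module.finrank F (Submodule.span F (Set.range x)))) := by
  have e0 : {g : Matrix (Fin n) (Fin m) F // g * x = 0} ≃
      {g : Fin n → (Fin m → F) // ∀ i, Matrix.vecMul (g i) x = 0} :=
    Equiv.subtypeEquiv (Equiv.refl _) (fun g => by
      exact mul_eq_zero_iff_rows g x)
  have e1 := e0.trans (Equiv.subtypePiEquivPi (p := fun _ (v : Fin m → F) => Matrix.vecMul v x = 0))
  have e2 : {v : Fin m → F // Matrix.vecMul v x = 0} ≃ LinearMap.ker (Matrix.vecMulLinear x) :=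
    Equiv.subtypeEquivRight (fun v => by simp [LinearMap.mem_ker])
  have hker : Fintype.card {v : Fin m → F // Matrix.vecMul v x = 0} =
      Fintype.card F ^ (m - Module.finrank F (Submodule.span F (Set.range x))) := by
    rw [Fintype.card_congr e2]
    have hrk : Module.finrank F (LinearMap.ker (Matrix.vecMulLinear x)) =
        m - Module.finrank F (Submodule.span F (Set.range x)) := by
      have h1 := LinearMap.finrank_range_add_finrank_ker (Matrix.vecMulLinear x)
      rw [(Eq.trans (range_vecMulLinear x) rfl : LinearMap.range (Matrix.vecMulLinear x) = Submodule.span F (Set.range x))] at h1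
      have h2 : Module.finrank F (Fin m → F) = m := by simp
      omega
    rw [← hrk]
    exact Module.card_eq_pow_finrank
  rw [Fintype.card_congr e1, Fintype.card_pi]
  simp [hker, ← pow_mul, Nat.mul_comm]

open Classical in
lemma card_sol (x : Matrix (Fin m) (Fin T) F) (y : Matrix (Fin n) (Fin T) F) :
    (Finset.univ.filter fun g : Matrix (Fin n) (Fin m) F => g * x = y).card =
      if Submodule.span F (Set.range y) ≤ Submodule.span F (Set.range x)
      then Fintype.card F ^ (n * (m - Module.finrank F (Submodule.span F (Set.range x))))
      else 0 := by
  by_cases h : Submodule.span F (Set.range y) ≤ Submodule.span F (Set.range x)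
  · rw [if_pos h]
    obtain ⟨g₀, hg₀⟩ := (solvable_iff x y).2 h
    rw [← card_sol_zero (n := n) x, Fintype.card_subtype]
    apply Finset.card_nbij' (fun g => g - g₀) (fun g => g + g₀)
    · intro a ha
      simp only [coe_filter, mem_filter, mem_univ, true_and, Set.mem_setOf_eq] at ha ⊢
      rw [Matrix.sub_mul, ha, hg₀, sub_self]
    · intro b hb
      simp only [coe_filter, mem_filter, mem_univ, true_and, Set.mem_setOf_eq] at hb ⊢
      rw [Matrix.add_mul, hb, hg₀, zero_add]
    · intro a _; simp
    · intro b _; simp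
  · rw [if_neg h, Finset.card_eq_zero, Finset.filter_eq_empty_iff]
    intro g _ hg
    exact h ((solvable_iff x y).1 ⟨g, hg⟩)

open Classical in
lemma sum_sol (x : Matrix (Fin m) (Fin T) F) (y : Matrix (Fin n) (Fin T) F) (c : ℝ) :
    (∑ g : Matrix (Fin n) (Fin m) F, if g * x = y then c else 0) =
      c * (if Submodule.span F (Set.range y) ≤ Submodule.span F (Set.range x)
        then (Fintype.card F : ℝ) ^ (n * (m - Module.finrank F (Submodule.span F (Set.range x))))
        else 0) := by
  have h1 : (∑ g : Matrix (Fin n) (Fin m) F, if g * x = y then c else 0) =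
      c * ∑ g : Matrix (Fin n) (Fin m) F, if g * x = y then (1 : ℝ) else 0 := by
    rw [Finset.mul_sum]
    exact Finset.sum_congr rfl fun g _ => by split_ifs <;> simp
  rw [h1, Finset.sum_boole, card_sol]
  push_cast [apply_ite (fun k : ℕ => (k : ℝ))]
  ring_nf

end AuxLemmas

/-- The mutual information between the input and output matrices of the non-coherent
matrix channel equals the mutual information between their row spaces. -/
theorem matrix_channel_subspace_equivalence
    (F : Type) [Field F] [Fintype F] (m n T : ℕ)
    (hm : 0 < m) (hn : 0 < n) (hT : 0 < T)
    (p : Matrix (Fin m) (Fin T) F → ℝ)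
    (hp0 : ∀ x, 0 ≤ p x) (hp1 : ∑ x, p x = 1) :
    mutualInfo (channelPMF F m n T p)
        (fun ω => ω.1)
        (fun ω => ω.2 * ω.1)
      =
    mutualInfo (channelPMF F m n T p)
        (fun ω => Submodule.span F (Set.range ω.1))
        (fun ω => Submodule.span F (Set.range (ω.2 * ω.1))) := by
  classical
  simp only [mutualInfo, channelPMF]
  apply Finset.sum_congr rfl
  intro ω _
  by_cases hx : p ω.1 = 0
  · simp [hx]
  congr 2
  simp only [Fintype.sum_prod_type]
  set Q : ℝ := (Fintype.card (Matrix (Fin n) (Fin m) F) : ℝ) with hQdef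
  set y : Matrix (Fin n) (Fin T) F := ω.2 * ω.1 with hy
  set A := Submodule.span F (Set.range ω.1) with hA
  set B := Submodule.span F (Set.range y) with hB
  set Φ : Submodule F (Fin T → F) → ℝ := fun W =>
    if B ≤ W then (Fintype.card F : ℝ) ^ (n * (m - Module.finrank F W)) else 0 with hPhi
  set S : ℝ := ∑ x' : Matrix (Fin m) (Fin T) F,
    p x' * Φ (Submodule.span F (Set.range x')) with hS
  set piA : ℝ := ∑ x' : Matrix (Fin m) (Fin T) F,
    if Submodule.span F (Set.range x') = A then p x' else 0 with hpi
  set cB : ℝ := ∑ y' : Matrix (Fin n) (Fin T) F,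
    if Submodule.span F (Set.range y') = B then (1 : ℝ) else 0 with hcB
  -- positivity facts
  have hQpos : (0 : ℝ) < Q := by
    rw [hQdef]; exact_mod_cast Fintype.card_pos
  have hQne : Q ≠ 0 := ne_of_gt hQpos
  have hpx : 0 < p ω.1 := lt_of_le_of_ne (hp0 _) (Ne.symm hx)
  have hpiA : 0 < piA := by
    rw [hpi]
    have h1 : (fun x' => if Submodule.span F (Set.range x') = A then p x' else 0) ω.1 ≤
        ∑ x' : Matrix (Fin m) (Fin T) F,
          if Submodule.span F (Set.range x') = A then p x' else 0 :=
      Finset.single_le_sum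
        (f := fun x' => if Submodule.span F (Set.range x') = A then p x' else 0)
        (fun i _ => by
          by_cases hh : Submodule.span F (Set.range i) = A
          · simpa [hh] using hp0 i
          · simp [hh]) (mem_univ ω.1)
    simp only [if_pos hA.symm] at h1
    exact lt_of_lt_of_le hpx h1
  have hcBpos : 0 < cB := by
    rw [hcB]
    have h1 : (fun y' : Matrix (Fin n) (Fin T) F =>
        if Submodule.span F (Set.range y') = B then (1:ℝ) else 0) y ≤
        ∑ y' : Matrix (Fin n) (Fin T) F,
          if Submodule.span F (Set.range y') = B then (1:ℝ) else 0 :=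
      Finset.single_le_sum
        (f := fun y' : Matrix (Fin n) (Fin T) F =>
          if Submodule.span F (Set.range y') = B then (1:ℝ) else 0)
        (fun i _ => by
          by_cases hh : Submodule.span F (Set.range i) = B
          · simp [hh]
          · simp [hh]) (mem_univ y)
    simp only [if_pos hB.symm] at h1
    exact lt_of_lt_of_le one_pos h1
  -- inner-sum evaluations
  have hsol : ∀ (x' : Matrix (Fin m) (Fin T) F) (c : ℝ),
      (∑ g' : Matrix (Fin n) (Fin m) F, if g' * x' = y then c else 0) =
        c * Φ (Submodule.span F (Set.range x')) := by
    intro x' c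
    simp only [hPhi]
    rw [hB]
    exact sum_sol x' y c
  have hpsi : ∀ (x' : Matrix (Fin m) (Fin T) F) (c : ℝ),
      (∑ g' : Matrix (Fin n) (Fin m) F,
          if Submodule.span F (Set.range (g' * x')) = B then c else 0) =
        c * (cB * Φ (Submodule.span F (Set.range x'))) := by
    intro x' c
    have step : ∀ g' : Matrix (Fin n) (Fin m) F,
        (if Submodule.span F (Set.range (g' * x')) = B then c else 0) =
          ∑ y' : Matrix (Fin n) (Fin T) F,
            if g' * x' = y' then (if Submodule.span F (Set.range y') = B then c else 0)
            else 0 := by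
      intro g'
      rw [Finset.sum_ite_eq]
      simp
    rw [Finset.sum_congr rfl fun g' _ => step g', Finset.sum_comm]
    have inner : ∀ y' : Matrix (Fin n) (Fin T) F,
        (∑ g' : Matrix (Fin n) (Fin m) F,
            if g' * x' = y' then (if Submodule.span F (Set.range y') = B then c else 0)
            else 0) =
          (if Submodule.span F (Set.range y') = B then (1:ℝ) else 0) *
            (c * Φ (Submodule.span F (Set.range x'))) := by
      intro y'
      rw [sum_sol x' y']
      by_cases hb : Submodule.span F (Set.range y') = B
      · simp only [if_pos hb]
        rw [hb]
        simp only [hPhi]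
        ring
      · simp only [if_neg hb]
        ring
    rw [Finset.sum_congr rfl fun y' _ => inner y', ← Finset.sum_mul, ← hcB]
    ring
  -- the six sums
  have e1 : (∑ x' : Matrix (Fin m) (Fin T) F, ∑ g' : Matrix (Fin n) (Fin m) F,
      if x' = ω.1 ∧ g' * x' = y then p x' / Q else 0) = p ω.1 * (Φ A / Q) := by
    have inner : ∀ x' : Matrix (Fin m) (Fin T) F,
        (∑ g' : Matrix (Fin n) (Fin m) F,
            if x' = ω.1 ∧ g' * x' = y then p x' / Q else 0) =
          if x' = ω.1 then p x' / Q * Φ (Submodule.span F (Set.range x')) else 0 := by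
      intro x'
      by_cases h : x' = ω.1
      · rw [if_pos h, ← hsol x' (p x' / Q)]
        exact Finset.sum_congr rfl fun g' _ => by simp [h]
      · simp [h]
    rw [Finset.sum_congr rfl fun x' _ => inner x',
      Finset.sum_ite_eq' Finset.univ ω.1, if_pos (mem_univ _), ← hA]
    ring
  have e2 : (∑ x' : Matrix (Fin m) (Fin T) F, ∑ g' : Matrix (Fin n) (Fin m) F,
      if x' = ω.1 then p x' / Q else 0) = p ω.1 := by
    have inner : ∀ x' : Matrix (Fin m) (Fin T) F,
        (∑ _g' : Matrix (Fin n) (Fin m) F, if x' = ω.1 then p x' / Q else 0) =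
          if x' = ω.1 then p x' else 0 := by
      intro x'
      rw [Finset.sum_const, card_univ, nsmul_eq_mul, ← hQdef]
      split_ifs with h
      · rw [mul_comm, div_mul_cancel₀ _ hQne]
      · rw [mul_zero]
    rw [Finset.sum_congr rfl fun x' _ => inner x',
      Finset.sum_ite_eq' Finset.univ ω.1, if_pos (mem_univ _)]
  have e3 : (∑ x' : Matrix (Fin m) (Fin T) F, ∑ g' : Matrix (Fin n) (Fin m) F,
      if g' * x' = y then p x' / Q else 0) = S / Q := by
    rw [Finset.sum_congr rfl fun x' _ => hsol x' (p x' / Q), hS, Finset.sum_div]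
    exact Finset.sum_congr rfl fun x' _ => by ring
  have e4 : (∑ x' : Matrix (Fin m) (Fin T) F, ∑ g' : Matrix (Fin n) (Fin m) F,
      if Submodule.span F (Set.range x') = A ∧
         Submodule.span F (Set.range (g' * x')) = B then p x' / Q else 0) =
      (piA * cB) * (Φ A / Q) := by
    have inner : ∀ x' : Matrix (Fin m) (Fin T) F,
        (∑ g' : Matrix (Fin n) (Fin m) F,
            if Submodule.span F (Set.range x') = A ∧
               Submodule.span F (Set.range (g' * x')) = B then p x' / Q else 0) =
          (if Submodule.span F (Set.range x') = A then p x' else 0) * (cB * Φ A / Q) := by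
      intro x'
      by_cases h : Submodule.span F (Set.range x') = A
      · have h2 : (∑ g' : Matrix (Fin n) (Fin m) F,
            if Submodule.span F (Set.range x') = A ∧
               Submodule.span F (Set.range (g' * x')) = B then p x' / Q else 0) =
            ∑ g' : Matrix (Fin n) (Fin m) F,
              if Submodule.span F (Set.range (g' * x')) = B then p x' / Q else 0 :=
          Finset.sum_congr rfl fun g' _ => by simp [h]
        rw [h2, hpsi x' (p x' / Q), if_pos h, ← h]
        ring
      · simp [h]
    rw [Finset.sum_congr rfl fun x' _ => inner x', ← Finset.sum_mul, ← hpi]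
    ring
  have e5 : (∑ x' : Matrix (Fin m) (Fin T) F, ∑ g' : Matrix (Fin n) (Fin m) F,
      if Submodule.span F (Set.range x') = A then p x' / Q else 0) = piA := by
    have inner : ∀ x' : Matrix (Fin m) (Fin T) F,
        (∑ _g' : Matrix (Fin n) (Fin m) F,
            if Submodule.span F (Set.range x') = A then p x' / Q else 0) =
          if Submodule.span F (Set.range x') = A then p x' else 0 := by
      intro x'
      rw [Finset.sum_const, card_univ, nsmul_eq_mul, ← hQdef]
      split_ifs with h
      · rw [mul_comm, div_mul_cancel₀ _ hQne]
      · rw [mul_zero]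
    rw [Finset.sum_congr rfl fun x' _ => inner x', ← hpi]
  have e6 : (∑ x' : Matrix (Fin m) (Fin T) F, ∑ g' : Matrix (Fin n) (Fin m) F,
      if Submodule.span F (Set.range (g' * x')) = B then p x' / Q else 0) =
      cB * (S / Q) := by
    rw [Finset.sum_congr rfl fun x' _ => hpsi x' (p x' / Q), hS, Finset.sum_div,
      Finset.mul_sum]
    exact Finset.sum_congr rfl fun x' _ => by ring
  rw [e1, e2, e3, e4, e5, e6]
  rw [show piA * (cB * (S / Q)) = (piA * cB) * (S / Q) by ring]
  rw [mul_div_mul_left _ _ hx, mul_div_mul_left _ _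
    (mul_ne_zero (ne_of_gt hpiA) (ne_of_gt hcBpos))]
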